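/- In a k-nested multi-counter system, the transition relation → on configurations is monotonic with respect to the nested multiset well-quasi-order ⪯_1: if c_1 ⪯_1 c_2 and c_1 → c_3, then there exists c_4 with c_2 → c_4 and c_3 ⪯_1 c_4. -/

import Mathlib

/-- A relation is a well-quasi-ordering if it is a preorder (reflexive and
transitive) and every infinite sequence has indices `i < j` with
`r (f i) (f j)`. -/
def IsWQO {α : Type*} (r : α → α → Prop) : Prop :=
  Reflexive r ∧ Transitive r ∧ ∀ f : ℕ → α, ∃ i j, i < j ∧ r (f i) (f j)


/-- The multiset embedding induced by a relation `r`. -/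
def MultisetEmb {α : Type*} (r : α → α → Prop) (B B' : Multiset α) : Prop :=
  ∃ t ≤ B', Multiset.Rel r B t

/-- Configurations of level `k - n` of a `k`-nested multi-counter system:
`Conf Q 0 = Q` and `Conf Q (n+1) = Q × (finite multisets over Conf Q n)`;
the configurations `C_0` of the system are `Conf Q k`. -/
def Conf (Q : Type) : ℕ → Type
  | 0 => Q
  | n + 1 => Q × Multiset (Conf Q n)

/-- The nested multiset well-quasi-order `⪯_1` on configurations, obtained from
equality on `Q` by iterating the product and multiset-embedding constructions. -/
def confLe {Q : Type} : ∀ n, Conf Q n → Conf Q n → Prop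
  | 0, q, q' => q = q'
  | n + 1, c, c' => c.1 = c'.1 ∧ MultisetEmb (confLe n) c.2 c'.2

/-- `StateChain n qs c` holds iff `c` is the chain configuration
`q'_j(q'_{j+1}(⋯(q'_k)))` of level `n` built from the list `qs` of states. -/
def StateChain {Q : Type} : ∀ n, List Q → Conf Q n → Prop
  | 0, [q], c => c = q
  | n + 1, q :: qs, c => c.1 = q ∧ ∃ c', StateChain n qs c' ∧ c.2 = {c'}
  | _, _, _ => False

/-- The rewrite step of a nested multi-counter system along a transition with
source tuple `qs` and target tuple `qs'`: a configuration
`(q_0, X_1 + q_1(X_2 + ⋯ q_i(X_{i+1})⋯))` is rewritten into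
`(q'_0, X_1 + q'_1(X_2 + ⋯ q'_i(X_{i+1} + q'_{i+1}(⋯ q'_{k-1}(q'_k)))⋯))`. -/
def Step {Q : Type} : ∀ n, List Q → List Q → Conf Q n → Conf Q n → Prop
  | 0, [q], [q'], c, c' => c = q ∧ c' = q'
  | n + 1, [q], q' :: rest, c, c' =>
      c.1 = q ∧ c'.1 = q' ∧ ∃ d, StateChain n rest d ∧ c'.2 = c.2 + {d}
  | n + 1, q₀ :: q₁ :: qs, q' :: rest, c, c' =>
      c.1 = q₀ ∧ c'.1 = q' ∧
        ∃ d d' X, Step n (q₁ :: qs) rest d d' ∧ c.2 = X + {d} ∧ c'.2 = X + {d'}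
  | _, _, _, _, _ => False

/-- The transition relation of a `k`-nMCS with transition relation `δ`
(a set of pairs of a source tuple and a target tuple of states). -/
def StepM {Q : Type} (k : ℕ) (δ : Set (List Q × List Q))
    (c c' : Conf Q k) : Prop :=
  ∃ t ∈ δ, Step k t.1 t.2 c c'


lemma rel_singleton_left' {α β : Type*} {r : α → β → Prop} {a : α}
    {Z : Multiset β} : Multiset.Rel r {a} Z ↔ ∃ b, r a b ∧ Z = {b} := by
  rw [← Multiset.cons_zero a, Multiset.rel_cons_left]
  simp

lemma confLe_refl {Q : Type} : ∀ n (c : Conf Q n), confLe n c c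
  | 0, _ => rfl
  | n + 1, c => ⟨rfl, c.2, le_rfl,
      Multiset.rel_refl_of_refl_on fun x _ => confLe_refl n x⟩

lemma step_mono {Q : Type} : ∀ (n : ℕ) (qs qs' : List Q)
    (c₁ c₂ c₃ : Conf Q n), confLe n c₁ c₂ → Step n qs qs' c₁ c₃ →
    ∃ c₄, Step n qs qs' c₂ c₄ ∧ confLe n c₃ c₄ := by
  intro n
  induction n with
  | zero =>
    intro qs qs' c₁ c₂ c₃ hle hstep
    match qs, qs' with
    | [q], [q'] =>
      obtain ⟨h1, h3⟩ := hstep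
      exact ⟨q', ⟨hle ▸ h1, rfl⟩, h3 ▸ rfl⟩
    | [], _ => exact absurd hstep not_false
    | _ :: _ :: _, _ => exact absurd hstep not_false
    | [_], [] => exact absurd hstep not_false
    | [_], _ :: _ :: _ => exact absurd hstep not_false
  | succ n ih =>
    intro qs qs' c₁ c₂ c₃ hle hstep
    obtain ⟨hfst, t, ht, hrel⟩ := hle
    match qs, qs' with
    | [], _ => exact absurd hstep not_false
    | [q], q' :: rest =>
      obtain ⟨h1, h3, d, hd, hsum⟩ := hstep
      refine ⟨(q', c₂.2 + {d}), ⟨hfst ▸ h1, rfl, d, hd, rfl⟩, h3, t + {d}, add_le_add_left ht _, ?_⟩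
      rw [hsum]
      exact hrel.add (Multiset.rel_refl_of_refl_on fun x _ => confLe_refl n x)
    | [_], [] => exact absurd hstep not_false
    | q₀ :: q₁ :: qs, q' :: rest =>
      obtain ⟨h1, h3, d, d', X, hstep', hX, hX'⟩ := hstep
      rw [hX] at hrel
      obtain ⟨Y, Z, hY, hZ, rfl⟩ := Multiset.rel_add_left.1 hrel
      obtain ⟨e, he, rfl⟩ := (rel_singleton_left').1 hZ
      obtain ⟨e', hstepe, hee'⟩ := ih (q₁ :: qs) rest d e d' he hstep'
      have hsing : ({e} : Multiset (Conf Q n)) ≤ c₂.2 :=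
        le_trans (Multiset.le_add_left _ _) ht
      obtain ⟨u, hu⟩ := Multiset.le_iff_exists_add.1 hsing
      have hYu : Y ≤ u := by
        have : {e} + Y ≤ {e} + u := by rwa [add_comm {e} Y, ← hu]
        exact (add_le_add_iff_left _).1 this
      refine ⟨(q', u + {e'}),
        ⟨hfst ▸ h1, rfl, e, e', u, hstepe, by rw [hu, add_comm], rfl⟩,
        h3, Y + {e'}, add_le_add_left hYu _, ?_⟩
      · rw [hX']
        exact hY.add (rel_singleton_left'.2 ⟨e', hee', rfl⟩)
    | _ :: _ :: _, [] => exact absurd hstep not_false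


/-- The transition relation of a `k`-nested multi-counter system is monotonic
with respect to the nested multiset well-quasi-order `⪯_1`. -/
theorem stepM_monotone {Q : Type} (k : ℕ) (δ : Set (List Q × List Q))
    (c₁ c₂ c₃ : Conf Q k) (hle : confLe k c₁ c₂) (hstep : StepM k δ c₁ c₃) :
    ∃ c₄, StepM k δ c₂ c₄ ∧ confLe k c₃ c₄ := by
  obtain ⟨tr, htr, hstep⟩ := hstep
  obtain ⟨c₄, hstep', hle'⟩ := step_mono k tr.1 tr.2 c₁ c₂ c₃ hle hstep
  exact ⟨c₄, ⟨tr, htr, hstep'⟩, hle'⟩
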